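/- Let S₁, S₂, …, Sₙ be queryless schedules such that each Sᵢ and the concatenation S₁.S₂.⋯.Sₙ are all consistent. Then: N^min_I(S₁⋯Sₙ) = ⋃_{i=1}^{n} (N^min_I(Sᵢ) ∩ ⋂_{k<i} N^max_I(Sₖ)); N^max_I(S₁⋯Sₙ) = ⋂_{i=1}^{n} (N^max_I(Sᵢ) ∪ ⋃_{k<i} N^min_I(Sₖ)); E^min_I(S₁⋯Sₙ) = ⋃_{i=1}^{n} (E^min_I(Sᵢ) ∩ ⋂_{k<i} E^max_I(Sₖ)); E^max_I(S₁⋯Sₙ) = ⋂_{i=1}^{n} (E^max_I(Sᵢ) ∪ ⋃_{k<i} E^min_I(Sₖ)). -/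

import Mathlib

attribute [local instance] Classical.propDecidable

/-! ## Data model: nodes, labels, edges, document trees -/

abbrev Node := ℕ
abbrev Label := ℕ
abbrev Edge := Node × Label × Node

/-- A candidate document tree: a finite node set, a finite edge set, a root. -/
structure Tree3 where
  N : Finset Node
  E : Finset Edge
  root : Node

/-- The edge-step relation of a set of labelled edges. -/
def estep (E : Set Edge) (a b : Node) : Prop := ∃ l : Label, (a, l, b) ∈ E

/-- `T` is a document tree: the root is a node, edges connect nodes, every node has at
most one incoming edge, the root has none, and every node is reachable from the root
(edges are directed from parent to child). -/
def IsDT (T : Tree3) : Prop :=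
  T.root ∈ T.N ∧
  (∀ e ∈ T.E, e.1 ∈ T.N ∧ e.2.2 ∈ T.N) ∧
  (∀ e ∈ T.E, ∀ e' ∈ T.E, e.2.2 = e'.2.2 → e = e') ∧
  (∀ e ∈ T.E, e.2.2 ≠ T.root) ∧
  (∀ n ∈ T.N, Relation.ReflTransGen (estep (↑T.E)) T.root n)

/-! ## Update operations and queryless schedules -/

inductive Op where
  | add : Node → Label → Node → Op
  | del : Node → Label → Node → Op
deriving DecidableEq

/-- Apply an update operation to a tree; `none` when the operation is undefined. -/
noncomputable def applyOp (o : Op) (T : Tree3) : Option Tree3 :=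
  match o with
  | Op.add m l n =>
      let T' : Tree3 := ⟨insert n T.N, insert (m, l, n) T.E, T.root⟩
      if (m, l, n) ∈ T.E ∨ ¬ IsDT T' then none else some T'
  | Op.del m l n =>
      let T' : Tree3 := ⟨T.N.erase n, T.E.erase (m, l, n), T.root⟩
      if (m, l, n) ∉ T.E ∨ ¬ IsDT T' then none else some T'

/-- An action is an operation tagged with a transaction identifier. -/
abbrev QLAction := Op × ℕ

/-- A queryless (QL) schedule is a finite sequence of actions. -/
abbrev QLSchedule := List QLAction

/-- Apply a QL schedule to a tree, operation by operation. -/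
noncomputable def applyQL : QLSchedule → Tree3 → Option Tree3
  | [], T => some T
  | a :: rest, T => (applyOp a.1 T).bind (applyQL rest)

/-- `S[T]` is defined (and `T` is a document tree). -/
def DefinedOn (S : QLSchedule) (T : Tree3) : Prop := IsDT T ∧ (applyQL S T).isSome

/-- A QL schedule is consistent iff it is defined on at least one document tree. -/
def ConsistentQL (S : QLSchedule) : Prop := ∃ T, DefinedOn S T

def Op.src : Op → Node
  | Op.add m _ _ => m
  | Op.del m _ _ => m

def Op.tgt : Op → Node
  | Op.add _ _ n => n
  | Op.del _ _ n => n

def Op.edge : Op → Edge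
  | Op.add m l n => (m, l, n)
  | Op.del m l n => (m, l, n)

/-- The list of operations of a QL schedule. -/
def ops (S : QLSchedule) : List Op := S.map Prod.fst

/-- The operation containing the first occurrence of the node `x` in `S`, if any. -/
def firstNodeOp (S : QLSchedule) (x : Node) : Option Op :=
  (ops S).find? (fun o => (o.src == x) || (o.tgt == x))

/-- The operation containing the last occurrence of the node `x` in `S`, if any. -/
def lastNodeOp (S : QLSchedule) (x : Node) : Option Op :=
  (ops S).reverse.find? (fun o => (o.src == x) || (o.tgt == x))

/-- The operation containing the first occurrence of the edge `e` in `S`, if any. -/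
def firstEdgeOp (S : QLSchedule) (e : Edge) : Option Op :=
  (ops S).find? (fun o => o.edge == e)

/-- The operation containing the last occurrence of the edge `e` in `S`, if any. -/
def lastEdgeOp (S : QLSchedule) (e : Edge) : Option Op :=
  (ops S).reverse.find? (fun o => o.edge == e)

/-- Some edge with target `x` occurs in `S`. -/
def occursTgt (S : QLSchedule) (x : Node) : Prop := ∃ o ∈ ops S, o.tgt = x

/-- `N^min_I(S)`. -/
def NminI (S : QLSchedule) : Set Node :=
  {x | ∃ l n, firstNodeOp S x = some (Op.add x l n)} ∪
  {x | ∃ l n, firstNodeOp S x = some (Op.del x l n)} ∪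
  {x | ∃ m l, firstNodeOp S x = some (Op.del m l x)}

/-- `N^max_I(S)`. -/
def NmaxI (S : QLSchedule) : Set Node :=
  {x | ¬ ∃ m l, firstNodeOp S x = some (Op.add m l x)}

/-- `E^min_I(S)`. -/
def EminI (S : QLSchedule) : Set Edge :=
  {e | firstEdgeOp S e = some (Op.del e.1 e.2.1 e.2.2)}

/-- `E^max_I(S)`. -/
def EmaxI (S : QLSchedule) : Set Edge :=
  EminI S ∪ {e | ¬ occursTgt S e.1 ∧ ¬ occursTgt S e.2.2}

/-- `N^min_O(S)`. -/
def NminO (S : QLSchedule) : Set Node :=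
  {x | ∃ l n, lastNodeOp S x = some (Op.del x l n)} ∪
  {x | ∃ l n, lastNodeOp S x = some (Op.add x l n)} ∪
  {x | ∃ m l, lastNodeOp S x = some (Op.add m l x)}

/-- `N^max_O(S)`. -/
def NmaxO (S : QLSchedule) : Set Node :=
  {x | ¬ ∃ m l, lastNodeOp S x = some (Op.del m l x)}

/-- `E^min_O(S)`. -/
def EminO (S : QLSchedule) : Set Edge :=
  {e | lastEdgeOp S e = some (Op.add e.1 e.2.1 e.2.2)}

/-- `E^max_O(S)`. -/
def EmaxO (S : QLSchedule) : Set Edge :=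
  EminO S ∪ {e | ¬ occursTgt S e.1 ∧ ¬ occursTgt S e.2.2}

/-- `ADD(S)`: edges whose last occurrence in `S` is an addition. -/
def ADDs (S : QLSchedule) : Set Edge :=
  {e | lastEdgeOp S e = some (Op.add e.1 e.2.1 e.2.2)}

/-- `DEL(S)`: edges whose last occurrence in `S` is a deletion. -/
def DELs (S : QLSchedule) : Set Edge :=
  {e | lastEdgeOp S e = some (Op.del e.1 e.2.1 e.2.2)}

/-- `T` is a basic input tree of `S`. -/
def BasicInput (S : QLSchedule) (T : Tree3) : Prop :=
  IsDT T ∧ NminI S ⊆ ↑T.N ∧ ↑T.N ⊆ NmaxI S ∧ EminI S ⊆ ↑T.E ∧ ↑T.E ⊆ EmaxI S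

/-- `T` is a basic output tree of `S`. -/
def BasicOutput (S : QLSchedule) (T : Tree3) : Prop :=
  IsDT T ∧ NminO S ⊆ ↑T.N ∧ ↑T.N ⊆ NmaxO S ∧ EminO S ⊆ ↑T.E ∧ ↑T.E ⊆ EmaxO S

/-- The C-condition (nine clauses). -/
def CCond (S : QLSchedule) : Prop :=
  (∀ i j (n l₁ n₁ n₂ l₂ : ℕ), i < j →
      (ops S)[i]? = some (Op.add n l₁ n₁) → (ops S)[j]? = some (Op.add n₂ l₂ n) →
      ∃ k : ℕ, i < k ∧ k < j ∧ (ops S)[k]? = some (Op.del n l₁ n₁)) ∧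
  (∀ i j (n₁ l₁ n n₂ l₂ : ℕ), i < j →
      (ops S)[i]? = some (Op.add n₁ l₁ n) → (ops S)[j]? = some (Op.add n₂ l₂ n) →
      ∃ k : ℕ, i < k ∧ k < j ∧ (ops S)[k]? = some (Op.del n₁ l₁ n)) ∧
  (∀ i j (n l₁ n₁ n₂ l₂ : ℕ), i < j →
      (ops S)[i]? = some (Op.add n l₁ n₁) → (ops S)[j]? = some (Op.del n₂ l₂ n) →
      ∃ k : ℕ, i < k ∧ k < j ∧ (ops S)[k]? = some (Op.del n l₁ n₁)) ∧
  (∀ i j (n₁ l₁ n l₂ n₂ : ℕ), i < j →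
      (ops S)[i]? = some (Op.add n₁ l₁ n) → (ops S)[j]? = some (Op.del n l₂ n₂) →
      ∃ k : ℕ, i < k ∧ k < j ∧ (ops S)[k]? = some (Op.add n l₂ n₂)) ∧
  (∀ i j (n₁ l₁ n n₂ l₂ : ℕ), i < j → (n₁, l₁) ≠ (n₂, l₂) →
      (ops S)[i]? = some (Op.add n₁ l₁ n) → (ops S)[j]? = some (Op.del n₂ l₂ n) →
      ∃ k : ℕ, i < k ∧ k < j ∧ (ops S)[k]? = some (Op.del n₁ l₁ n)) ∧
  (∀ i j (n l₁ n₁ n₂ l₂ : ℕ), i < j →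
      (ops S)[i]? = some (Op.del n l₁ n₁) → (ops S)[j]? = some (Op.add n₂ l₂ n) →
      ∃ k : ℕ, ∃ n₃ l₃ : ℕ, i < k ∧ k < j ∧ (ops S)[k]? = some (Op.del n₃ l₃ n)) ∧
  (∀ i j (n₁ l₁ n l₂ n₂ : ℕ), i < j →
      (ops S)[i]? = some (Op.del n₁ l₁ n) → (ops S)[j]? = some (Op.add n l₂ n₂) →
      ∃ k : ℕ, ∃ n₃ l₃ : ℕ, i < k ∧ k < j ∧ (ops S)[k]? = some (Op.add n₃ l₃ n)) ∧
  (∀ i j (n₁ l₁ n l₂ n₂ : ℕ), i < j →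
      (ops S)[i]? = some (Op.del n₁ l₁ n) → (ops S)[j]? = some (Op.del n l₂ n₂) →
      ∃ k : ℕ, ∃ n₃ l₃ : ℕ, i < k ∧ k < j ∧ (ops S)[k]? = some (Op.add n₃ l₃ n)) ∧
  (∀ i j (n₁ l₁ n n₂ l₂ : ℕ), i < j →
      (ops S)[i]? = some (Op.del n₁ l₁ n) → (ops S)[j]? = some (Op.del n₂ l₂ n) →
      ∃ k : ℕ, i < k ∧ k < j ∧ (ops S)[k]? = some (Op.add n₂ l₂ n))

/-! ## Transactions, equivalence and serializability of QL schedules -/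

/-- Two QL schedules are interleavings of the same set of transactions: for every
transaction identifier, the subsequences of actions with that identifier coincide. -/
def SameTrans (S S' : QLSchedule) : Prop :=
  ∀ t : ℕ, S.filter (fun a => a.2 == t) = S'.filter (fun a => a.2 == t)

/-- A schedule is serial iff the actions of each transaction occur consecutively. -/
def Serial (S : QLSchedule) : Prop :=
  ∀ i j k : ℕ, i ≤ j → j ≤ k →
    ∀ a b c : QLAction, S[i]? = some a → S[j]? = some b → S[k]? = some c →
      a.2 = c.2 → b.2 = a.2

/-- Two QL schedules are equivalent: they are defined on the same non-empty set of
document trees and produce the same output tree on each of them. -/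
def EquivQL (S S' : QLSchedule) : Prop :=
  (∃ T, DefinedOn S T) ∧ ∀ T, IsDT T → applyQL S T = applyQL S' T

/-- A QL schedule is serializable iff it is equivalent to a serial schedule over the
same set of transactions. -/
def SerializableQL (S : QLSchedule) : Prop :=
  ∃ S', Serial S' ∧ SameTrans S S' ∧ EquivQL S S'

/-! ## Paths and forests -/

/-- `SPath G m lp n`: there is a directed path from `m` to `n` in the edge set `G`
whose label path is `lp`. -/
inductive SPath (G : Set Edge) : Node → List Label → Node → Prop where
  | nil (n : Node) : SPath G n [] n
  | cons {m n n' : Node} {l : Label} {lp : List Label} :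
      (m, l, n) ∈ G → SPath G n lp n' → SPath G m (l :: lp) n'

/-- A set of edges is a forest: no two distinct edges share a target, and
there is no (non-trivial) directed cycle. -/
def IsForest (G : Set Edge) : Prop :=
  (∀ e ∈ G, ∀ e' ∈ G, e.2.2 = e'.2.2 → e = e') ∧
  ¬ ∃ (n : Node) (lp : List Label), lp ≠ [] ∧ SPath G n lp n

/-! ## Path expressions -/

inductive Step where
  | star : Step
  | lab : Label → Step
deriving DecidableEq

/-- Path expressions: `ε`, `pe/f` and `pe//f` (a single step `f` is `ε/f`). -/
inductive PathExpr where
  | eps : PathExpr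
  | child : PathExpr → Step → PathExpr
  | desc : PathExpr → Step → PathExpr
deriving DecidableEq

def Step.mtch : Step → Label → Prop
  | Step.star, _ => True
  | Step.lab l, l' => l = l'

def Step.mtchB : Step → Label → Bool
  | Step.star, _ => true
  | Step.lab l, l' => l == l'

/-- The set `L(pe)` of label paths represented by a path expression
(a label path is a list of labels). -/
def PathExpr.lang : PathExpr → Set (List Label)
  | PathExpr.eps => {[]}
  | PathExpr.child pe f => {w | ∃ u l, u ∈ pe.lang ∧ f.mtch l ∧ w = u ++ [l]}
  | PathExpr.desc pe f => {w | ∃ u v l, u ∈ pe.lang ∧ f.mtch l ∧ w = u ++ v ++ [l]}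

/-- `SOP` on a *reversed* label path. -/
def SOPr : PathExpr → List Label → Set PathExpr
  | pe, [] => {pe}
  | PathExpr.eps, _ :: _ => ∅
  | PathExpr.child pe f, l :: lp => if f.mtchB l then SOPr pe lp else ∅
  | PathExpr.desc pe f, l :: lp =>
      if f.mtchB l then SOPr pe lp ∪ SOPr (PathExpr.desc pe Step.star) lp else ∅
termination_by pe lp => lp.length

/-- `SOP(pe)_lp`: the set of non-empty `lp`-prefixes of `pe`. -/
def SOP (pe : PathExpr) (lp : List Label) : Set PathExpr := SOPr pe lp.reverse

/-- `L(SOP(pe)_lp)`. -/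
def LSOP (pe : PathExpr) (lp : List Label) : Set (List Label) :=
  ⋃ pe' ∈ SOP pe lp, pe'.lang

/-- `pe/lp`: append a label path to a path expression with `/` separators. -/
def PathExpr.appendLP : PathExpr → List Label → PathExpr
  | pe, [] => pe
  | pe, l :: lp => PathExpr.appendLP (PathExpr.child pe (Step.lab l)) lp

/-- The prefixes of a path expression (including `ε`). -/
def PathExpr.prefixes : PathExpr → Set PathExpr
  | PathExpr.eps => {PathExpr.eps}
  | PathExpr.child pe f => insert (PathExpr.child pe f) pe.prefixes
  | PathExpr.desc pe f => insert (PathExpr.desc pe f) pe.prefixes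

/-! ## Schedules with queries -/

inductive GOp where
  | query : Node → PathExpr → GOp
  | add : Node → Label → Node → GOp
  | del : Node → Label → Node → GOp

abbrev GAction := GOp × ℕ

/-- A (general) schedule is a finite sequence of query/add/del actions. -/
abbrev Schedule := List GAction

def GOp.toOp? : GOp → Option Op
  | GOp.query _ _ => none
  | GOp.add m l n => some (Op.add m l n)
  | GOp.del m l n => some (Op.del m l n)

/-- The QL schedule of a schedule: remove all query actions. -/
def qlOf (S : Schedule) : QLSchedule :=
  S.filterMap (fun a => (a.1.toOp?).map (fun o => (o, a.2)))

/-- The answer of `query(n,pe)` on a tree `T`. -/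
def queryAnswer (n : Node) (pe : PathExpr) (T : Tree3) : Set Node :=
  {n' | n' ∈ T.N ∧ ∃ lp, SPath (↑T.E) n lp n' ∧ lp ∈ pe.lang}

/-- A schedule is consistent iff its QL schedule is. -/
def ConsistentSched (S : Schedule) : Prop := ConsistentQL (qlOf S)

/-- Run a schedule on a tree: the final tree together with, for each query (in order),
its transaction identifier and its answer; `none` if some update is undefined. -/
noncomputable def runQ : Schedule → Tree3 → Option (Tree3 × List (ℕ × Set Node))
  | [], T => some (T, [])
  | (GOp.query n pe, t) :: rest, T =>
      (runQ rest T).map (fun p => (p.1, (t, queryAnswer n pe T) :: p.2))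
  | (GOp.add m l n, _) :: rest, T =>
      (applyOp (Op.add m l n) T).bind (runQ rest)
  | (GOp.del m l n, _) :: rest, T =>
      (applyOp (Op.del m l n) T).bind (runQ rest)

/-- Two schedules are equivalent: defined on the same non-empty set of document trees,
and on each such tree they produce the same output tree and, per transaction, the same
sequence of query answers. -/
def EquivSched (S₁ S₂ : Schedule) : Prop :=
  (∃ T, IsDT T ∧ (runQ S₁ T).isSome) ∧
  ∀ T, IsDT T →
    ((runQ S₁ T).isSome ↔ (runQ S₂ T).isSome) ∧
    ∀ p₁ p₂, runQ S₁ T = some p₁ → runQ S₂ T = some p₂ →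
      p₁.1 = p₂.1 ∧
      ∀ t : ℕ, (p₁.2.filter (fun x => x.1 == t)).map Prod.snd
             = (p₂.2.filter (fun x => x.1 == t)).map Prod.snd

/-- Two schedules are interleavings of the same set of transactions. -/
def SameTransG (S S' : Schedule) : Prop :=
  ∀ t : ℕ, S.filter (fun a => a.2 == t) = S'.filter (fun a => a.2 == t)

/-- A schedule is serial iff the actions of each transaction occur consecutively. -/
def SerialG (S : Schedule) : Prop :=
  ∀ i j k : ℕ, i ≤ j → j ≤ k →
    ∀ a b c : GAction, S[i]? = some a → S[j]? = some b → S[k]? = some c →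
      a.2 = c.2 → b.2 = a.2

/-- A schedule is serializable iff it is equivalent to a serial schedule over the same
set of transactions. -/
def SerializableSched (S : Schedule) : Prop :=
  ∃ S', SerialG S' ∧ SameTransG S S' ∧ EquivSched S S'

/-- `E^min(S^Q)` where `Q` is the action at position `i` of `S`. -/
def EminSQ (S : Schedule) (i : ℕ) : Set Edge :=
  (EminI (qlOf S) \ DELs (qlOf (S.take i))) ∪ ADDs (qlOf (S.take i))

/-- `E^max(S^Q)` where `Q` is the action at position `i` of `S`. -/
def EmaxSQ (S : Schedule) (i : ℕ) : Set Edge :=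
  (EmaxI (qlOf S) \ DELs (qlOf (S.take i))) ∪ ADDs (qlOf (S.take i))

/-- `x` is a non-building-node of `S`: some `add(m,l,x)` or `del(m,l,x)` occurs in `S`. -/
def NonBuilding (S : Schedule) (x : Node) : Prop :=
  ∃ a ∈ S, ∃ m l, a.1 = GOp.add m l x ∨ a.1 = GOp.del m l x

/-- `x` is a node of the graph (edge set) `G`. -/
def NodeOfGraph (G : Set Edge) (x : Node) : Prop := ∃ e ∈ G, e.1 = x ∨ e.2.2 = x

/-- `x` has a parent in the edge set `G`. -/
def HasParent (G : Set Edge) (x : Node) : Prop := ∃ e ∈ G, e.2.2 = x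

/-- `PQRN(S,Q)` for the query `Q = query(n,pe)` at position `i` of `S`:
the nodes `m` of the graph `E^min(S^Q)` that are non-building-nodes, whose root
ancestor `r` in the forest `E^min(S^Q)` (the node with no parent from which `m` is
reachable, via the label path `ALabel(S^Q,m)`) is a building-node different from `n`,
and such that `L(SOP(pe)_{ALabel(S^Q,m)}) ≠ ∅`. -/
def PQRN (S : Schedule) (i : ℕ) (n : Node) (pe : PathExpr) : Set Node :=
  {m | NodeOfGraph (EminSQ S i) m ∧ NonBuilding S m ∧
       ∃ r lp, SPath (EminSQ S i) r lp m ∧ ¬ HasParent (EminSQ S i) r ∧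
         ¬ NonBuilding S r ∧ r ≠ n ∧ LSOP pe lp ≠ ∅}

/-- The answer of the query at position `i` of `S` when `S` is applied to `T`
(the query is evaluated on the tree obtained by applying the actions before it). -/
noncomputable def answerAt (S : Schedule) (i : ℕ) (T : Tree3) : Option (Set Node) :=
  match S[i]? with
  | some (GOp.query n pe, _) => (applyQL (qlOf (S.take i)) T).map (queryAnswer n pe)
  | _ => none

/-! ### Auxiliary development for Statement 8 -/

section Stmt8Aux

/-- A document tree has no self-loop edge. -/
lemma aux_dt_no_selfloop {T : Tree3} (hT : IsDT T) {a : Node} {l : Label}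
    (h : (a, l, a) ∈ T.E) : False := by
  obtain ⟨hr, hEnds, hUniq, hNr, hReach⟩ := hT
  have haN : a ∈ T.N := (hEnds _ h).1
  have hane : a ≠ T.root := hNr _ h
  have hmain : ∀ y, Relation.ReflTransGen (estep (↑T.E)) T.root y → y ≠ a := by
    intro y hy
    induction hy with
    | refl => exact fun he => hane he.symm
    | @tail b c hb hstep ih =>
        intro he
        obtain ⟨q, hq⟩ := hstep
        rw [he] at hq
        have hq' : (b, q, a) ∈ T.E := hq
        have heq := hUniq _ hq' _ h rfl
        exact ih (congrArg Prod.fst heq)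
  exact hmain a (hReach a haN) rfl

lemma aux_applyOp_add {m l n : ℕ} {T T' : Tree3}
    (h : applyOp (Op.add m l n) T = some T') :
    (m, l, n) ∉ T.E ∧ T' = ⟨insert n T.N, insert (m, l, n) T.E, T.root⟩ ∧ IsDT T' := by
  have h' : (if (m, l, n) ∈ T.E ∨ ¬ IsDT ⟨insert n T.N, insert (m, l, n) T.E, T.root⟩
      then (none : Option Tree3)
      else some ⟨insert n T.N, insert (m, l, n) T.E, T.root⟩) = some T' := h
  split at h'
  · exact absurd h' (by simp)
  · next hc =>
      push_neg at hc
      simp only [Option.some.injEq] at h'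
      exact ⟨hc.1, h'.symm, h' ▸ hc.2⟩

lemma aux_applyOp_del {m l n : ℕ} {T T' : Tree3}
    (h : applyOp (Op.del m l n) T = some T') :
    (m, l, n) ∈ T.E ∧ T' = ⟨T.N.erase n, T.E.erase (m, l, n), T.root⟩ ∧ IsDT T' := by
  have h' : (if (m, l, n) ∉ T.E ∨ ¬ IsDT ⟨T.N.erase n, T.E.erase (m, l, n), T.root⟩
      then (none : Option Tree3)
      else some ⟨T.N.erase n, T.E.erase (m, l, n), T.root⟩) = some T' := h
  split at h'
  · exact absurd h' (by simp)
  · next hc =>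
      push_neg at hc
      simp only [Option.some.injEq] at h'
      exact ⟨hc.1, h'.symm, h' ▸ hc.2⟩

lemma aux_applyOp_isDT {o : Op} {T T' : Tree3} (h : applyOp o T = some T') : IsDT T' := by
  cases o with
  | add m l n => exact (aux_applyOp_add h).2.2
  | del m l n => exact (aux_applyOp_del h).2.2

lemma aux_applyQL_append (A B : QLSchedule) (T : Tree3) :
    applyQL (A ++ B) T = (applyQL A T).bind (applyQL B) := by
  induction A generalizing T with
  | nil => simp [applyQL]
  | cons a A ih =>
      show (applyOp a.1 T).bind (applyQL (A ++ B)) = _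
      cases hoT : applyOp a.1 T with
      | none => simp [applyQL, hoT]
      | some T1 => simp [applyQL, hoT, ih]

lemma aux_applyQL_isDT {S : QLSchedule} {T T' : Tree3} (hT : IsDT T)
    (h : applyQL S T = some T') : IsDT T' := by
  induction S generalizing T with
  | nil => simp [applyQL] at h; exact h ▸ hT
  | cons a A ih =>
      simp only [applyQL] at h
      obtain ⟨T1, h1, h2⟩ := Option.bind_eq_some_iff.mp h
      exact ih (aux_applyOp_isDT h1) h2

lemma aux_ops_append (A B : QLSchedule) : ops (A ++ B) = ops A ++ ops B :=
  List.map_append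

lemma aux_firstNodeOp_append (A B : QLSchedule) (x : Node) :
    firstNodeOp (A ++ B) x = (firstNodeOp A x).or (firstNodeOp B x) := by
  unfold firstNodeOp
  rw [aux_ops_append, List.find?_append]

lemma aux_firstEdgeOp_append (A B : QLSchedule) (e : Edge) :
    firstEdgeOp (A ++ B) e = (firstEdgeOp A e).or (firstEdgeOp B e) := by
  unfold firstEdgeOp
  rw [aux_ops_append, List.find?_append]

lemma aux_occursTgt_append (A B : QLSchedule) (x : Node) :
    occursTgt (A ++ B) x ↔ occursTgt A x ∨ occursTgt B x := by
  simp [occursTgt, aux_ops_append, or_and_right, exists_or]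

/-- No operation in a schedule defined on some tree is a self-loop. -/
lemma aux_noLoop_of_defined {S : QLSchedule} {T : Tree3} (hT : IsDT T)
    (h : (applyQL S T).isSome) : ∀ o ∈ ops S, o.src ≠ o.tgt := by
  induction S generalizing T with
  | nil => intro o ho; simp [ops] at ho
  | cons a A ih =>
      have h' : ((applyOp a.1 T).bind (applyQL A)).isSome = true := h
      obtain ⟨T', hT'⟩ := Option.isSome_iff_exists.mp h'
      obtain ⟨T1, h1, h2⟩ := Option.bind_eq_some_iff.mp hT'
      intro o ho
      have ho' : o = a.1 ∨ o ∈ ops A := List.mem_cons.mp ho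
      rcases ho' with rfl | hmem
      · obtain ⟨aop, tid⟩ := a
        cases aop with
        | add m l n =>
            intro hsl
            have hmn : m = n := hsl
            subst hmn
            obtain ⟨-, hTeq, hDT'⟩ := aux_applyOp_add h1
            rw [hTeq] at hDT'
            exact aux_dt_no_selfloop hDT' (Finset.mem_insert_self _ _)
        | del m l n =>
            intro hsl
            have hmn : m = n := hsl
            subst hmn
            exact aux_dt_no_selfloop hT (aux_applyOp_del h1).1
      · exact ih (aux_applyOp_isDT h1) (Option.isSome_iff_exists.mpr ⟨_, h2⟩) o hmem

lemma aux_consistent_noLoop {S : QLSchedule} (h : ConsistentQL S) :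
    ∀ o ∈ ops S, o.src ≠ o.tgt := by
  obtain ⟨T, hT, hs⟩ := h
  exact aux_noLoop_of_defined hT hs

/-! #### Node-set append lemmas -/

lemma aux_mem_NminI {S : QLSchedule} {x : Node} :
    x ∈ NminI S ↔ ((∃ l n, firstNodeOp S x = some (Op.add x l n)) ∨
      (∃ l n, firstNodeOp S x = some (Op.del x l n)) ∨
      (∃ m l, firstNodeOp S x = some (Op.del m l x))) := by
  simp [NminI, or_assoc]

lemma aux_mem_NmaxI {S : QLSchedule} {x : Node} :
    x ∈ NmaxI S ↔ ¬ ∃ m l, firstNodeOp S x = some (Op.add m l x) := Iff.rfl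

lemma aux_firstNodeOp_pred {S : QLSchedule} {x : Node} {o : Op}
    (h : firstNodeOp S x = some o) : o.src = x ∨ o.tgt = x := by
  have := List.find?_some h
  simpa using this

lemma aux_firstNodeOp_mem {S : QLSchedule} {x : Node} {o : Op}
    (h : firstNodeOp S x = some o) : o ∈ ops S :=
  List.mem_of_find?_eq_some h

lemma aux_NminI_append {S B : QLSchedule} (hl : ∀ o ∈ ops S, o.src ≠ o.tgt) :
    NminI (S ++ B) = NminI S ∪ (NmaxI S ∩ NminI B) := by
  ext x
  simp only [Set.mem_union, Set.mem_inter_iff, aux_mem_NminI, aux_mem_NmaxI]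
  cases hS : firstNodeOp S x with
  | none =>
      have hSB : firstNodeOp (S ++ B) x = firstNodeOp B x := by
        rw [aux_firstNodeOp_append, hS, Option.none_or]
      simp [hSB, hS]
  | some o =>
      have hSB : firstNodeOp (S ++ B) x = some o := by
        rw [aux_firstNodeOp_append, hS]; rfl
      have hpred := aux_firstNodeOp_pred hS
      have hne := hl o (aux_firstNodeOp_mem hS)
      cases o with
      | add p q r =>
          have hne' : p ≠ r := hne
          simp only [Op.src, Op.tgt] at hpred
          simp only [hSB, hS, Option.some.injEq]
          by_cases hpx : p = x
          · constructor
            · intro _; left; left; exact ⟨q, r, by rw [hpx]⟩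
            · intro _; left; exact ⟨q, r, by rw [hpx]⟩
          · have hrx : r = x := hpred.resolve_left hpx
            constructor
            · rintro (⟨l', n', hq⟩ | ⟨l', n', hq⟩ | ⟨m', l', hq⟩)
              · injection hq with h1 h2 h3; exact absurd h1 hpx
              · exact Op.noConfusion hq
              · exact Op.noConfusion hq
            · rintro ((⟨l', n', hq⟩ | ⟨l', n', hq⟩ | ⟨m', l', hq⟩) | ⟨hmax, -⟩)
              · injection hq with h1 h2 h3; exact absurd h1 hpx
              · exact Op.noConfusion hq
              · exact Op.noConfusion hq
              · exact absurd ⟨p, q, by rw [hrx]⟩ hmax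
      | del p q r =>
          simp only [Op.src, Op.tgt] at hpred
          simp only [hSB, hS, Option.some.injEq]
          have hminS : (∃ l' n', Op.del p q r = Op.add x l' n') ∨
              (∃ l' n', Op.del p q r = Op.del x l' n') ∨
              (∃ m' l', Op.del p q r = Op.del m' l' x) := by
            rcases hpred with h | h
            · right; left; exact ⟨q, r, by rw [h]⟩
            · right; right; exact ⟨p, q, by rw [h]⟩
          exact ⟨fun _ => Or.inl hminS, fun _ => hminS⟩

lemma aux_NmaxI_append {S B : QLSchedule} (hl : ∀ o ∈ ops S, o.src ≠ o.tgt) :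
    NmaxI (S ++ B) = NmaxI S ∩ (NminI S ∪ NmaxI B) := by
  ext x
  simp only [Set.mem_inter_iff, Set.mem_union, aux_mem_NminI, aux_mem_NmaxI]
  cases hS : firstNodeOp S x with
  | none =>
      have hSB : firstNodeOp (S ++ B) x = firstNodeOp B x := by
        rw [aux_firstNodeOp_append, hS, Option.none_or]
      simp [hSB, hS]
  | some o =>
      have hSB : firstNodeOp (S ++ B) x = some o := by
        rw [aux_firstNodeOp_append, hS]; rfl
      have hpred := aux_firstNodeOp_pred hS
      have hne := hl o (aux_firstNodeOp_mem hS)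
      cases o with
      | add p q r =>
          have hne' : p ≠ r := hne
          simp only [Op.src, Op.tgt] at hpred
          simp only [hSB, hS, Option.some.injEq]
          by_cases hpx : p = x
          · have hrx : r ≠ x := fun hc => hne' (hpx.trans hc.symm)
            constructor
            · intro hmax
              exact ⟨hmax, Or.inl (Or.inl ⟨q, r, by rw [hpx]⟩)⟩
            · rintro ⟨hmax, -⟩; exact hmax
          · have hrx : r = x := hpred.resolve_left hpx
            constructor
            · intro hmax; exact absurd ⟨p, q, by rw [hrx]⟩ hmax
            · rintro ⟨hmax, -⟩; exact absurd ⟨p, q, by rw [hrx]⟩ hmax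
      | del p q r =>
          simp only [Op.src, Op.tgt] at hpred
          simp only [hSB, hS, Option.some.injEq]
          have hminS : (∃ l' n', Op.del p q r = Op.add x l' n') ∨
              (∃ l' n', Op.del p q r = Op.del x l' n') ∨
              (∃ m' l', Op.del p q r = Op.del m' l' x) := by
            rcases hpred with h | h
            · right; left; exact ⟨q, r, by rw [h]⟩
            · right; right; exact ⟨p, q, by rw [h]⟩
          have hmaxS : ¬ ∃ m' l', Op.del p q r = Op.add m' l' x := by
            rintro ⟨m', l', hq⟩; exact Op.noConfusion hq
          exact ⟨fun hmax => ⟨hmax, Or.inl hminS⟩, fun h => h.1⟩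

/-! #### Edge-set lemmas -/

lemma aux_firstEdgeOp_edge {S : QLSchedule} {e : Edge} {o : Op}
    (h : firstEdgeOp S e = some o) : o.edge = e := by
  have := List.find?_some h
  simpa using this

lemma aux_firstEdgeOp_mem {S : QLSchedule} {e : Edge} {o : Op}
    (h : firstEdgeOp S e = some o) : o ∈ ops S :=
  List.mem_of_find?_eq_some h

lemma aux_op_tgt_edge (o : Op) : o.edge.2.2 = o.tgt := by
  cases o <;> rfl

lemma aux_occursTgt_of_firstEdgeOp_some {S : QLSchedule} {e : Edge} {o : Op}
    (h : firstEdgeOp S e = some o) : occursTgt S e.2.2 := by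
  refine ⟨o, aux_firstEdgeOp_mem h, ?_⟩
  rw [← aux_firstEdgeOp_edge h, aux_op_tgt_edge]

lemma aux_step_core {o : Op} {T T' : Tree3} {e : Edge} (hT : IsDT T)
    (h : applyOp o T = some T') (hne : o.edge ≠ e) (he : e ∈ T'.E) :
    e ∈ T.E ∧ o.tgt ≠ e.1 ∧ o.tgt ≠ e.2.2 := by
  obtain ⟨m, l, n⟩ := e
  cases o with
  | add p q r =>
      obtain ⟨hmem, hT', hDT'⟩ := aux_applyOp_add h
      have hne' : (p, q, r) ≠ (m, l, n) := fun hc => hne (by simpa [Op.edge] using hc)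
      subst hT'
      have heT : (m, l, n) ∈ T.E := by
        rcases Finset.mem_insert.mp he with hc | hc
        · exact absurd hc.symm hne'
        · exact hc
      refine ⟨heT, ?_, ?_⟩
      · -- r ≠ m
        intro hrm
        simp only [Op.tgt] at hrm
        subst hrm
        obtain ⟨hr', hEnds', hUniq', hNr', hReach'⟩ := hDT'
        obtain ⟨hr0, hEnds0, hUniq0, hNr0, hReach0⟩ := hT
        have hmN : r ∈ T.N := (hEnds0 _ heT).1
        by_cases hroot : r = T.root
        · exact hNr' (p, q, r) (Finset.mem_insert_self _ _) hroot
        · have hreach := hReach0 r hmN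
          rcases Relation.ReflTransGen.cases_tail hreach with hc | ⟨c, hc, hstep⟩
          · exact hroot hc
          · obtain ⟨b, hb⟩ := hstep
            have hb' : (c, b, r) ∈ T.E := hb
            have heq := hUniq' (p, q, r) (Finset.mem_insert_self _ _)
              (c, b, r) (Finset.mem_insert_of_mem hb') rfl
            exact hmem (heq ▸ hb')
      · -- r ≠ n
        intro hrn
        simp only [Op.tgt] at hrn
        subst hrn
        obtain ⟨hr', hEnds', hUniq', hNr', hReach'⟩ := hDT'
        have heq := hUniq' (p, q, r) (Finset.mem_insert_self _ _)
          (m, l, r) (Finset.mem_insert_of_mem heT) rfl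
        exact hne' heq
  | del p q r =>
      obtain ⟨hmem, hT', hDT'⟩ := aux_applyOp_del h
      have hne' : (p, q, r) ≠ (m, l, n) := fun hc => hne (by simpa [Op.edge] using hc)
      subst hT'
      have heT : (m, l, n) ∈ T.E := Finset.mem_of_mem_erase he
      refine ⟨heT, ?_, ?_⟩
      · -- r ≠ m
        intro hrm
        simp only [Op.tgt] at hrm
        subst hrm
        obtain ⟨hr', hEnds', hUniq', hNr', hReach'⟩ := hDT'
        have := (hEnds' _ he).1
        simp only at this
        exact (Finset.mem_erase.mp this).1 rfl
      · -- r ≠ n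
        intro hrn
        simp only [Op.tgt] at hrn
        subst hrn
        obtain ⟨hr0, hEnds0, hUniq0, hNr0, hReach0⟩ := hT
        exact hne' (hUniq0 (p, q, r) hmem (m, l, r) heT rfl)

lemma aux_run_pres {A : QLSchedule} {T T' : Tree3} {e : Edge} (hT : IsDT T)
    (h : applyQL A T = some T') (hfe : firstEdgeOp A e = none) (he : e ∈ T'.E) :
    e ∈ T.E ∧ ¬ occursTgt A e.1 ∧ ¬ occursTgt A e.2.2 := by
  induction A generalizing T with
  | nil =>
      simp only [applyQL, Option.some.injEq] at h
      subst h
      exact ⟨he, by simp [occursTgt, ops], by simp [occursTgt, ops]⟩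
  | cons a A ih =>
      simp only [applyQL] at h
      obtain ⟨T1, h1, h2⟩ := Option.bind_eq_some_iff.mp h
      have hfe' : firstEdgeOp A e = none ∧ a.1.edge ≠ e := by
        unfold firstEdgeOp at hfe ⊢
        rw [show ops (a :: A) = a.1 :: ops A from rfl, List.find?_cons] at hfe
        split at hfe
        · exact absurd hfe (by simp)
        · next hp => exact ⟨hfe, by simpa using hp⟩
      obtain ⟨hA, hane⟩ := hfe'
      obtain ⟨he1, hocc1, hocc2⟩ := ih (aux_applyOp_isDT h1) h2 hA
      obtain ⟨heT, ht1, ht2⟩ := aux_step_core hT h1 hane he1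
      refine ⟨heT, ?_, ?_⟩
      · rintro ⟨o, ho, hto⟩
        rcases List.mem_cons.mp ho with rfl | hmem
        · exact ht1 hto
        · exact hocc1 ⟨o, hmem, hto⟩
      · rintro ⟨o, ho, hto⟩
        rcases List.mem_cons.mp ho with rfl | hmem
        · exact ht2 hto
        · exact hocc2 ⟨o, hmem, hto⟩

lemma aux_mem_of_firstDel {B : QLSchedule} {T : Tree3} {e : Edge} (hT : IsDT T)
    (h : (applyQL B T).isSome)
    (hfe : firstEdgeOp B e = some (Op.del e.1 e.2.1 e.2.2)) : e ∈ T.E := by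
  induction B generalizing T with
  | nil => simp [firstEdgeOp, ops] at hfe
  | cons b B ih =>
      simp only [applyQL] at h
      obtain ⟨T1, h1, h2⟩ := Option.bind_eq_some_iff.mp (Option.isSome_iff_exists.mp h).choose_spec
      unfold firstEdgeOp at hfe
      rw [show ops (b :: B) = b.1 :: ops B from rfl, List.find?_cons] at hfe
      split at hfe
      · next hp =>
          have hb : b.1 = Op.del e.1 e.2.1 e.2.2 := by
            simpa using hfe
          rw [hb] at h1
          have := (aux_applyOp_del h1).1
          simpa using this
      · next hp =>
          have hane : b.1.edge ≠ e := by simpa using hp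
          have he1 : e ∈ T1.E :=
            ih (aux_applyOp_isDT h1) (Option.isSome_iff_exists.mpr ⟨_, h2⟩) hfe
          exact (aux_step_core hT h1 hane he1).1

lemma aux_key {A B : QLSchedule} {T : Tree3} {e : Edge} (hT : IsDT T)
    (h : (applyQL (A ++ B) T).isSome) (hA : firstEdgeOp A e = none)
    (hB : firstEdgeOp B e = some (Op.del e.1 e.2.1 e.2.2)) :
    ¬ occursTgt A e.1 ∧ ¬ occursTgt A e.2.2 := by
  rw [aux_applyQL_append] at h
  obtain ⟨p, hp⟩ := Option.isSome_iff_exists.mp h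
  obtain ⟨T1, h1, h2⟩ := Option.bind_eq_some_iff.mp hp
  have hDT1 : IsDT T1 := aux_applyQL_isDT hT h1
  have heT1 : e ∈ T1.E :=
    aux_mem_of_firstDel hDT1 (Option.isSome_iff_exists.mpr ⟨_, h2⟩) hB
  exact (aux_run_pres hT h1 hA heT1).2

/-- The consistency hypothesis needed for the edge-set append lemmas. -/
def EHyp (S B : QLSchedule) : Prop :=
  ∀ e : Edge, firstEdgeOp S e = none →
    firstEdgeOp B e = some (Op.del e.1 e.2.1 e.2.2) →
    ¬ occursTgt S e.1 ∧ ¬ occursTgt S e.2.2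

lemma aux_mem_EminI {S : QLSchedule} {e : Edge} :
    e ∈ EminI S ↔ firstEdgeOp S e = some (Op.del e.1 e.2.1 e.2.2) := Iff.rfl

lemma aux_mem_EmaxI {S : QLSchedule} {e : Edge} :
    e ∈ EmaxI S ↔ (e ∈ EminI S ∨ (¬ occursTgt S e.1 ∧ ¬ occursTgt S e.2.2)) := Iff.rfl

lemma aux_EminI_append {S B : QLSchedule} (hH : EHyp S B) :
    EminI (S ++ B) = EminI S ∪ (EmaxI S ∩ EminI B) := by
  ext e
  simp only [Set.mem_union, Set.mem_inter_iff, aux_mem_EminI, aux_mem_EmaxI]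
  cases hS : firstEdgeOp S e with
  | none =>
      have hSB : firstEdgeOp (S ++ B) e = firstEdgeOp B e := by
        rw [aux_firstEdgeOp_append, hS, Option.none_or]
      rw [hSB]
      constructor
      · intro hB
        right
        exact ⟨Or.inr (hH e hS hB), hB⟩
      · rintro (hB | ⟨-, hB⟩)
        · exact absurd hB (by simp)
        · exact hB
  | some o =>
      have hSB : firstEdgeOp (S ++ B) e = some o := by
        rw [aux_firstEdgeOp_append, hS]; rfl
      have hocc : occursTgt S e.2.2 := aux_occursTgt_of_firstEdgeOp_some hS
      rw [hSB]
      constructor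
      · intro hdel; left; exact hdel
      · rintro (hdel | ⟨(hdel | ⟨-, hno⟩), -⟩)
        · exact hdel
        · exact hdel
        · exact absurd hocc hno

lemma aux_EmaxI_append {S B : QLSchedule} (hH : EHyp S B) :
    EmaxI (S ++ B) = EmaxI S ∩ (EminI S ∪ EmaxI B) := by
  ext e
  simp only [Set.mem_inter_iff, Set.mem_union, aux_mem_EminI, aux_mem_EmaxI]
  cases hS : firstEdgeOp S e with
  | none =>
      have hSB : firstEdgeOp (S ++ B) e = firstEdgeOp B e := by
        rw [aux_firstEdgeOp_append, hS, Option.none_or]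
      rw [hSB, aux_occursTgt_append, aux_occursTgt_append]
      constructor
      · rintro (hB | ⟨h12, h34⟩)
        · have hq := hH e hS hB
          exact ⟨Or.inr hq, Or.inr (Or.inl hB)⟩
        · push_neg at h12 h34
          exact ⟨Or.inr ⟨h12.1, h34.1⟩, Or.inr (Or.inr ⟨h12.2, h34.2⟩)⟩
      · rintro ⟨hX1, hX2⟩
        rcases hX2 with hX2 | hB | ⟨h2, h4⟩
        · exact absurd hX2 (by simp)
        · exact Or.inl hB
        · rcases hX1 with hX1 | ⟨h1, h3⟩
          · exact absurd hX1 (by simp)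
          · refine Or.inr ⟨?_, ?_⟩
            · rintro (hc | hc)
              · exact h1 hc
              · exact h2 hc
            · rintro (hc | hc)
              · exact h3 hc
              · exact h4 hc
  | some o =>
      have hSB : firstEdgeOp (S ++ B) e = some o := by
        rw [aux_firstEdgeOp_append, hS]; rfl
      have hocc : occursTgt S e.2.2 := aux_occursTgt_of_firstEdgeOp_some hS
      have hoccSB : occursTgt (S ++ B) e.2.2 :=
        (aux_occursTgt_append S B e.2.2).mpr (Or.inl hocc)
      rw [hSB]
      constructor
      · rintro (hdel | ⟨-, h4⟩)
        · exact ⟨Or.inl hdel, Or.inl hdel⟩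
        · exact absurd hoccSB h4
      · rintro ⟨hX1, -⟩
        rcases hX1 with hdel | ⟨-, h4⟩
        · exact Or.inl hdel
        · exact absurd hocc h4

/-! #### Recursive form of the right-hand sides -/

variable {α : Type*}

def bigU (f g : QLSchedule → Set α) : List QLSchedule → Set α
  | [] => ∅
  | S :: SS => f S ∪ (g S ∩ bigU f g SS)

def bigI (f g : QLSchedule → Set α) : List QLSchedule → Set α
  | [] => Set.univ
  | S :: SS => g S ∩ (f S ∪ bigI f g SS)

lemma aux_bigU_eq (f g : QLSchedule → Set α) (SS : List QLSchedule) :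
    (⋃ i : Fin SS.length, (f (SS.get i) ∩
      ⋂ (k : Fin SS.length) (_ : (k : ℕ) < (i : ℕ)), g (SS.get k))) = bigU f g SS := by
  induction SS with
  | nil => simp [bigU]
  | cons S SS ih =>
      rw [bigU, ← ih]
      ext x
      simp only [Set.mem_iUnion, Set.mem_iInter, Set.mem_inter_iff, Set.mem_union,
        List.length_cons]
      constructor
      · rintro ⟨i, hf, hg⟩
        rcases Fin.eq_zero_or_eq_succ i with rfl | ⟨j, rfl⟩
        · left; exact hf
        · right
          refine ⟨hg 0 (by simp), j, ?_, ?_⟩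
          · simpa using hf
          · intro k hk
            have := hg k.succ (by simpa using Nat.succ_lt_succ hk)
            simpa using this
      · rintro (hf | ⟨hgS, j, hf, hg⟩)
        · exact ⟨0, hf, fun k hk => absurd hk (by simp)⟩
        · refine ⟨j.succ, by simpa using hf, ?_⟩
          intro k hk
          rcases Fin.eq_zero_or_eq_succ k with rfl | ⟨k', rfl⟩
          · exact hgS
          · have hk' : (k' : ℕ) < (j : ℕ) := by
              simpa using hk
            simpa using hg k' hk'

lemma aux_bigI_eq (f g : QLSchedule → Set α) (SS : List QLSchedule) :
    (⋂ i : Fin SS.length, (g (SS.get i) ∪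
      ⋃ (k : Fin SS.length) (_ : (k : ℕ) < (i : ℕ)), f (SS.get k))) = bigI f g SS := by
  induction SS with
  | nil => simp [bigI]
  | cons S SS ih =>
      rw [bigI, ← ih]
      ext x
      simp only [Set.mem_iInter, Set.mem_inter_iff, Set.mem_union, Set.mem_iUnion,
        List.length_cons]
      constructor
      · intro hall
        have h0 := hall 0
        rcases h0 with hg0 | ⟨k, hk, -⟩
        swap
        · exact absurd hk (by simp)
        refine ⟨hg0, ?_⟩
        by_cases hfS : x ∈ f S
        · left; exact hfS
        · right
          intro j
          rcases hall j.succ with hg | ⟨k, hk, hf⟩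
          · left; simpa using hg
          · rcases Fin.eq_zero_or_eq_succ k with rfl | ⟨k', rfl⟩
            · exact absurd hf hfS
            · right
              exact ⟨k', by simpa using hk, by simpa using hf⟩
      · rintro ⟨hgS, hrest⟩ i
        rcases Fin.eq_zero_or_eq_succ i with rfl | ⟨j, rfl⟩
        · left; exact hgS
        · rcases hrest with hfS | hall
          · right; exact ⟨0, by simp, hfS⟩
          · rcases hall j with hg | ⟨k, hk, hf⟩
            · left; simpa using hg
            · right
              exact ⟨k.succ, by simpa using Nat.succ_lt_succ hk,
                by simpa using hf⟩

/-! #### Base cases -/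

lemma aux_NminI_nil : NminI ([] : QLSchedule) = ∅ := by
  ext x; simp [aux_mem_NminI, firstNodeOp, ops]

lemma aux_NmaxI_nil : NmaxI ([] : QLSchedule) = Set.univ := by
  ext x; simp [aux_mem_NmaxI, firstNodeOp, ops]

lemma aux_EminI_nil : EminI ([] : QLSchedule) = ∅ := by
  ext e; simp [aux_mem_EminI, firstEdgeOp, ops]

lemma aux_EmaxI_nil : EmaxI ([] : QLSchedule) = Set.univ := by
  ext e; simp [aux_mem_EmaxI, aux_mem_EminI, firstEdgeOp, occursTgt, ops]

/-! #### The main induction -/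

lemma aux_main (SS : List QLSchedule)
    (h : ∀ S ∈ SS, ConsistentQL S) (hconcat : ConsistentQL SS.flatten) :
    NminI SS.flatten = bigU NminI NmaxI SS ∧
    NmaxI SS.flatten = bigI NminI NmaxI SS ∧
    EminI SS.flatten = bigU EminI EmaxI SS ∧
    EmaxI SS.flatten = bigI EminI EmaxI SS := by
  induction SS with
  | nil =>
      exact ⟨aux_NminI_nil, aux_NmaxI_nil, aux_EminI_nil, aux_EmaxI_nil⟩
  | cons S SS ih =>
      have hjoin : (S :: SS).flatten = S ++ SS.flatten := rfl
      obtain ⟨T, hT, hsome⟩ := hconcat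
      rw [hjoin] at hsome
      have hnl : ∀ o ∈ ops S, o.src ≠ o.tgt :=
        aux_consistent_noLoop (h S List.mem_cons_self)
      have hEH : EHyp S SS.flatten := fun e hA hB => aux_key hT hsome hA hB
      have hcons' : ConsistentQL SS.flatten := by
        rw [aux_applyQL_append] at hsome
        obtain ⟨p, hp⟩ := Option.isSome_iff_exists.mp hsome
        obtain ⟨T1, h1, h2⟩ := Option.bind_eq_some_iff.mp hp
        exact ⟨T1, aux_applyQL_isDT hT h1, Option.isSome_iff_exists.mpr ⟨_, h2⟩⟩
      obtain ⟨ih1, ih2, ih3, ih4⟩ :=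
        ih (fun S' hS' => h S' (List.mem_cons_of_mem _ hS')) hcons'
      refine ⟨?_, ?_, ?_, ?_⟩
      · rw [hjoin, aux_NminI_append hnl, ih1]; rfl
      · rw [hjoin, aux_NmaxI_append hnl, ih2]; rfl
      · rw [hjoin, aux_EminI_append hEH, ih3]; rfl
      · rw [hjoin, aux_EmaxI_append hEH, ih4]; rfl

end Stmt8Aux

/-- The basic input sets of a consistent concatenation of consistent QL
schedules, computed from the basic input sets of the components. -/
theorem concat_basic_input_sets (SS : List QLSchedule)
    (h : ∀ S ∈ SS, ConsistentQL S) (hconcat : ConsistentQL SS.flatten) :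
    NminI SS.flatten =
      (⋃ i : Fin SS.length, (NminI (SS.get i) ∩
        ⋂ (k : Fin SS.length) (_ : (k : ℕ) < (i : ℕ)), NmaxI (SS.get k))) ∧
    NmaxI SS.flatten =
      (⋂ i : Fin SS.length, (NmaxI (SS.get i) ∪
        ⋃ (k : Fin SS.length) (_ : (k : ℕ) < (i : ℕ)), NminI (SS.get k))) ∧
    EminI SS.flatten =
      (⋃ i : Fin SS.length, (EminI (SS.get i) ∩
        ⋂ (k : Fin SS.length) (_ : (k : ℕ) < (i : ℕ)), EmaxI (SS.get k))) ∧
    EmaxI SS.flatten =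
      (⋂ i : Fin SS.length, (EmaxI (SS.get i) ∪
        ⋃ (k : Fin SS.length) (_ : (k : ℕ) < (i : ℕ)), EminI (SS.get k))) := by
  obtain ⟨h1, h2, h3, h4⟩ := aux_main SS h hconcat
  refine ⟨?_, ?_, ?_, ?_⟩
  · rw [h1, aux_bigU_eq]
  · rw [h2, aux_bigI_eq]
  · rw [h3, aux_bigU_eq]
  · rw [h4, aux_bigI_eq]
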